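/- arXiv:1002.1468 — 7 statements merged into one kernel-verified Lean document; each statement's English description precedes it below -/
import Mathlib

section
/- Let H = ⊕_{i∈I} ⟨f_i⟩ be an internal direct sum of cyclic subgroups of an abelian group, let J be a nonempty subset of I, and let I' ⊆ I \ J be a subset such that for every i ∈ I' there is j(i) ∈ J with the order of f_{j(i)} equal to the order of f_i. Define f_i¹ = f_i − f_{j(i)} for i ∈ I' and f_i¹ = f_i otherwise. Then H = ⊕_{i∈I} ⟨f_i¹⟩, i.e., the family (f_i¹)_{i∈I} is independent and generates H. -/
/-- A family `f : I → G` in an abelian group is independent if every finite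
integer relation `∑ aᵢ • f i = 0` has all summands `aᵢ • f i = 0`. -/
def IndepFamily {G : Type} [AddCommGroup G] {I : Type} (f : I → G) : Prop :=
  ∀ a : I →₀ ℤ, (a.sum fun i n => n • f i) = 0 → ∀ i, a i • f i = 0

/-- Let `H = ⊕_{i∈I} ⟨f_i⟩` (i.e. the `f_i` are independent and generate `H`),
`J ⊆ I` nonempty, `I' ⊆ I \ J`, and for each `i ∈ I'` an index `j i ∈ J` with
`o(f_{j i}) = o(f_i)`.  Setting `f¹_i = f_i - f_{j i}` for `i ∈ I'` and
`f¹_i = f_i` otherwise, the family `(f¹_i)` is independent and generates `H`. -/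
theorem stmt1 {G : Type} [AddCommGroup G] {I : Type} (f : I → G)
    (H : AddSubgroup G)
    (hindep : IndepFamily f)
    (hgen : AddSubgroup.closure (Set.range f) = H)
    (J : Set I) (hJ : J.Nonempty)
    (I' : Set I) (hI'J : Disjoint I' J)
    (j : I → I)
    (hj : ∀ i ∈ I', j i ∈ J ∧ addOrderOf (f (j i)) = addOrderOf (f i))
    (f1 : I → G)
    (hf1 : ∀ i ∈ I', f1 i = f i - f (j i))
    (hf1' : ∀ i ∉ I', f1 i = f i) :
    IndepFamily f1 ∧ AddSubgroup.closure (Set.range f1) = H := by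
  classical
  have hjI' : ∀ i ∈ I', j i ∉ I' := fun i hi =>
    fun h => hI'J.ne_of_mem h (hj i hi).1 rfl
  constructor
  · intro a ha i
    set a' : I →₀ ℤ := a.filter (· ∈ I') with ha'def
    set a'' : I →₀ ℤ := a.filter (fun i => ¬ i ∈ I') with ha''def
    set c : I →₀ ℤ := Finsupp.mapDomain j a' with hcdef
    set b : I →₀ ℤ := a - c with hbdef
    -- support facts
    have hsupp' : ∀ x ∈ a'.support, x ∈ I' := by
      intro x hx
      rw [ha'def, Finsupp.support_filter, Finset.mem_filter] at hx
      exact hx.2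
    have hsupp'' : ∀ x ∈ a''.support, x ∉ I' := by
      intro x hx
      rw [ha''def, Finsupp.support_filter, Finset.mem_filter] at hx
      exact hx.2
    -- rewrite the relation
    have hsplit : a' + a'' = a := Finsupp.filter_pos_add_filter_neg a _
    have hsumc : c.sum (fun i n => n • f i) = a'.sum (fun l n => n • f (j l)) :=
      Finsupp.sum_mapDomain_index (fun _ => zero_smul ℤ _)
        (fun l m₁ m₂ => add_smul m₁ m₂ (f l))
    have hb0 : b.sum (fun i n => n • f i) = 0 := by
      have h1 : b.sum (fun i n => n • f i)
          = a.sum (fun i n => n • f i) - c.sum (fun i n => n • f i) := by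
        rw [hbdef]
        exact Finsupp.sum_sub_index (fun l m₁ m₂ => sub_smul m₁ m₂ (f l))
      have h2 : a.sum (fun i n => n • f i)
          = a'.sum (fun i n => n • f i) + a''.sum (fun i n => n • f i) := by
        rw [← hsplit]
        exact Finsupp.sum_add_index' (fun _ => zero_smul ℤ _)
          (fun l m₁ m₂ => add_smul m₁ m₂ (f l))
      have h3 : a.sum (fun i n => n • f1 i)
          = a'.sum (fun i n => n • f1 i) + a''.sum (fun i n => n • f1 i) := by
        rw [← hsplit]
        exact Finsupp.sum_add_index' (fun _ => zero_smul ℤ _)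
          (fun l m₁ m₂ => add_smul m₁ m₂ (f1 l))
      have h4 : a'.sum (fun i n => n • f1 i)
          = a'.sum (fun i n => n • f i) - a'.sum (fun i n => n • f (j i)) := by
        rw [Finsupp.sum, Finsupp.sum, Finsupp.sum, ← Finset.sum_sub_distrib]
        refine Finset.sum_congr rfl fun x hx => ?_
        rw [hf1 x (hsupp' x hx), smul_sub]
      have h5 : a''.sum (fun i n => n • f1 i) = a''.sum (fun i n => n • f i) := by
        rw [Finsupp.sum, Finsupp.sum]
        refine Finset.sum_congr rfl fun x hx => ?_
        rw [hf1' x (hsupp'' x hx)]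
      rw [h1, h2, hsumc, ← ha]
      rw [h3, h4, h5]
      abel
    have hB := hindep b hb0
    -- c vanishes on I'
    have hcI' : ∀ l ∈ I', c l = 0 := by
      intro l hl
      rw [hcdef, Finsupp.mapDomain, Finsupp.sum_apply]
      rw [Finsupp.sum]
      refine Finset.sum_eq_zero fun x hx => ?_
      rw [Finsupp.single_apply, if_neg]
      exact fun h => hI'J.ne_of_mem hl (h ▸ (hj x (hsupp' x hx)).1) rfl
    -- key claim
    have key : ∀ l ∈ I', a l • f l = 0 ∧ a l • f (j l) = 0 := by
      intro l hl
      have hbl : b l = a l := by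
        rw [hbdef, Finsupp.sub_apply, hcI' l hl, sub_zero]
      have h1 : a l • f l = 0 := by rw [← hbl]; exact hB l
      refine ⟨h1, ?_⟩
      have hd : (addOrderOf (f l) : ℤ) ∣ a l :=
        addOrderOf_dvd_iff_zsmul_eq_zero.mpr h1
      rw [← (hj l hl).2] at hd
      exact addOrderOf_dvd_iff_zsmul_eq_zero.mp hd
    by_cases hi : i ∈ I'
    · rw [hf1 i hi, smul_sub, (key i hi).1, (key i hi).2, sub_zero]
    · rw [hf1' i hi]
      have hci : c i • f i = 0 := by
        rw [hcdef, Finsupp.mapDomain, Finsupp.sum_apply, Finsupp.sum, Finset.sum_smul]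
        refine Finset.sum_eq_zero fun x hx => ?_
        rw [Finsupp.single_apply]
        by_cases hji : j x = i
        · rw [if_pos hji]
          have hx' : x ∈ I' := hsupp' x hx
          have : a' x = a x := Finsupp.filter_apply_pos _ a hx'
          rw [this, ← hji]
          exact (key x hx').2
        · rw [if_neg hji, zero_smul]
      have hai : a i = b i + c i := by
        rw [hbdef, Finsupp.sub_apply]; ring
      rw [hai, add_smul, hB i, hci, add_zero]
  · -- generation
    have h1 : AddSubgroup.closure (Set.range f1) ≤ AddSubgroup.closure (Set.range f) := by
      rw [AddSubgroup.closure_le]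
      rintro _ ⟨i, rfl⟩
      by_cases hi : i ∈ I'
      · rw [hf1 i hi]
        exact sub_mem (AddSubgroup.subset_closure ⟨i, rfl⟩)
          (AddSubgroup.subset_closure ⟨j i, rfl⟩)
      · rw [hf1' i hi]
        exact AddSubgroup.subset_closure ⟨i, rfl⟩
    have h2 : AddSubgroup.closure (Set.range f) ≤ AddSubgroup.closure (Set.range f1) := by
      rw [AddSubgroup.closure_le]
      rintro _ ⟨i, rfl⟩
      by_cases hi : i ∈ I'
      · have : f i = f1 i + f1 (j i) := by
          rw [hf1 i hi, hf1' (j i) (hjI' i hi), sub_add_cancel]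
        rw [this]
        exact add_mem (AddSubgroup.subset_closure ⟨i, rfl⟩)
          (AddSubgroup.subset_closure ⟨j i, rfl⟩)
      · rw [← hf1' i hi]
        exact AddSubgroup.subset_closure ⟨i, rfl⟩
    rw [← hgen]
    exact le_antisymm h1 h2
end

section
/- Let G be an abelian p-group of the form G = ⟨A⟩ + H, where H is a subgroup of finite exponent and A = {e_i : i ∈ ℕ} is an independent family in G with o(e_i) ≥ exp H for every i. Then ⟨A⟩ is a pure subgroup of G, i.e., p^l⟨A⟩ = ⟨A⟩ ∩ p^l G for every natural number l. -/
/-- If the abelian `p`-group `G` equals `⟨A⟩ + H` with `H` of finite exponent and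
`A = {e_i}` independent with `o(e_i) ≥ exp H`, then `⟨A⟩` is pure in `G`:
`p^l ⟨A⟩ = ⟨A⟩ ∩ p^l G` for every `l`. -/
theorem stmt2 (G : Type) [AddCommGroup G] (p : ℕ) (hp : p.Prime)
    (hpgroup : ∀ g : G, ∃ n : ℕ, p ^ n • g = 0)
    (e : ℕ → G) (he : IndepFamily e)
    (H : AddSubgroup G)
    (hHexp : AddMonoid.exponent H ≠ 0)
    (horder : ∀ i, AddMonoid.exponent H ≤ addOrderOf (e i))
    (hsum : AddSubgroup.closure (Set.range e) ⊔ H = ⊤) :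
    ∀ l : ℕ,
      AddSubgroup.map (p ^ l • AddMonoidHom.id G) (AddSubgroup.closure (Set.range e)) =
        AddSubgroup.closure (Set.range e) ⊓
          AddSubgroup.map (p ^ l • AddMonoidHom.id G) (⊤ : AddSubgroup G) := by
  intro l
  set A := AddSubgroup.closure (Set.range e) with hA
  set m := (AddMonoid.exponent H).factorization p with hm
  have hm_le : p ^ m ≤ AddMonoid.exponent H :=
    Nat.le_of_dvd (Nat.pos_of_ne_zero hHexp) (Nat.ordProj_dvd _ p)
  have hm_kill : ∀ h : G, h ∈ H → p ^ m • h = 0 := by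
    intro h hH
    obtain ⟨n, hn⟩ := hpgroup h
    have hn' : p ^ n • (⟨h, hH⟩ : H) = 0 := Subtype.ext (by simpa using hn)
    have h1 : addOrderOf (⟨h, hH⟩ : H) ∣ p ^ n := addOrderOf_dvd_of_nsmul_eq_zero hn'
    obtain ⟨j, hj, hjo⟩ := (Nat.dvd_prime_pow hp).mp h1
    have h2 : addOrderOf (⟨h, hH⟩ : H) ∣ AddMonoid.exponent H := AddMonoid.addOrder_dvd_exponent _
    have hj' : j ≤ m := by
      rw [hjo] at h2
      exact (Nat.Prime.pow_dvd_iff_le_factorization hp hHexp).mp h2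
    have hdvd : addOrderOf (⟨h, hH⟩ : H) ∣ p ^ m := hjo ▸ pow_dvd_pow p hj'
    have := addOrderOf_dvd_iff_nsmul_eq_zero.mp hdvd
    simpa using congrArg (Subtype.val) this
  -- every e i has p-power order at least p ^ m
  have hord : ∀ i, (p : ℤ) ^ m ∣ (addOrderOf (e i) : ℤ) := by
    intro i
    obtain ⟨n, hn⟩ := hpgroup (e i)
    obtain ⟨j, hj, hjo⟩ := (Nat.dvd_prime_pow hp).mp (addOrderOf_dvd_of_nsmul_eq_zero hn)
    have hle : p ^ m ≤ p ^ j := hjo ▸ (hm_le.trans (horder i))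
    have : m ≤ j := (Nat.pow_le_pow_iff_right hp.one_lt).mp hle
    exact_mod_cast (pow_dvd_pow p this).trans hjo.symm.dvd
  -- the key claim : if p ^ l • h ∈ A with h ∈ H, then p ^ l • h is p ^ l times an element of A
  have key : ∀ h : G, h ∈ H → p ^ l • h ∈ A →
      p ^ l • h ∈ AddSubgroup.map (p ^ l • AddMonoidHom.id G) A := by
    intro h hH hmem
    by_cases hl : m ≤ l
    · have h0 : p ^ l • h = 0 := by
        rw [show l = (l - m) + m from (Nat.sub_add_cancel hl).symm, pow_add, mul_smul,
          hm_kill h hH, smul_zero]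
      rw [h0]; exact zero_mem _
    · push_neg at hl
      have hspan : p ^ l • h ∈ Submodule.span ℤ (Set.range e) := by
        have : p ^ l • h ∈ (Submodule.span ℤ (Set.range e)).toAddSubgroup := by
          rw [Submodule.span_int_eq_addSubgroupClosure]; exact hmem
        exact this
      obtain ⟨c, hc⟩ := Finsupp.mem_span_range_iff_exists_finsupp.mp hspan
      have hrel : ((((p : ℤ) ^ (m - l)) • c).sum fun i n => n • e i) = 0 := by
        rw [Finsupp.sum_smul_index' (fun i => zero_smul ℤ (e i))]
        have : (c.sum fun i n => ((p : ℤ) ^ (m - l) • n) • e i)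
            = (p : ℤ) ^ (m - l) • (c.sum fun i n => n • e i) := by
          rw [Finsupp.smul_sum]
          exact Finsupp.sum_congr fun i _ => by rw [smul_eq_mul, mul_smul]
        rw [this, hc]
        rw [← Nat.cast_pow, natCast_zsmul, ← mul_smul, ← pow_add,
          Nat.sub_add_cancel hl.le, hm_kill h hH]
      have hdvd : ∀ i, (p : ℤ) ^ l ∣ c i := by
        intro i
        have h1 := he _ hrel i
        rw [Finsupp.smul_apply, smul_eq_mul] at h1
        have h2 : (addOrderOf (e i) : ℤ) ∣ (p : ℤ) ^ (m - l) * c i :=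
          addOrderOf_dvd_iff_zsmul_eq_zero.mpr h1
        have h3 : (p : ℤ) ^ (m - l) * (p : ℤ) ^ l ∣ (p : ℤ) ^ (m - l) * c i := by
          rw [← pow_add, Nat.sub_add_cancel hl.le]
          exact (hord i).trans h2
        refine (mul_dvd_mul_iff_left ?_).mp h3
        exact pow_ne_zero _ (by exact_mod_cast hp.ne_zero)
      set d : ℕ →₀ ℤ := c.mapRange (fun n => n / (p : ℤ) ^ l) (by simp) with hd
      have hcd : ∀ i, c i = (p : ℤ) ^ l * d i := by
        intro i
        simp only [hd, Finsupp.mapRange_apply]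
        exact (Int.mul_ediv_cancel' (hdvd i)).symm
      set b := d.sum fun i n => n • e i with hb
      have hbA : b ∈ A := by
        refine AddSubgroup.sum_mem _ fun i _ => ?_
        exact AddSubgroup.zsmul_mem _ (AddSubgroup.subset_closure (Set.mem_range_self i)) _
      refine ⟨b, hbA, ?_⟩
      have hceq : c = ((p : ℤ) ^ l) • d :=
        Finsupp.ext fun i => by rw [Finsupp.smul_apply, smul_eq_mul, ← hcd i]
      rw [hceq, Finsupp.sum_smul_index' (fun i => zero_smul ℤ (e i))] at hc
      show p ^ l • b = p ^ l • h
      rw [hb, Finsupp.smul_sum, ← hc]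
      refine Finsupp.sum_congr fun i _ => ?_
      rw [smul_eq_mul, mul_smul, ← Nat.cast_pow, natCast_zsmul]
  -- main proof
  ext x
  rw [AddSubgroup.mem_map, AddSubgroup.mem_inf, AddSubgroup.mem_map]
  constructor
  · rintro ⟨a, ha, rfl⟩
    exact ⟨nsmul_mem ha _, a, trivial, rfl⟩
  · rintro ⟨hxA, g, -, rfl⟩
    obtain ⟨a, haA, h, hhH, hg⟩ := AddSubgroup.mem_sup.mp (hsum ▸ AddSubgroup.mem_top g)
    have hx : (p ^ l • AddMonoidHom.id G) g = p ^ l • a + p ^ l • h := by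
      show p ^ l • g = _
      rw [← hg, smul_add]
    have hxA' : p ^ l • g ∈ A := hxA
    have hyA : p ^ l • h ∈ A := by
      have heq : p ^ l • h = p ^ l • g - p ^ l • a := by
        have : p ^ l • g = p ^ l • a + p ^ l • h := hx
        rw [this]; abel
      rw [heq]
      exact sub_mem hxA' (nsmul_mem haA _)
    have h1 : p ^ l • h ∈ AddSubgroup.map (p ^ l • AddMonoidHom.id G) A := key h hhH hyA
    have h2 : p ^ l • a ∈ AddSubgroup.map (p ^ l • AddMonoidHom.id G) A := ⟨a, haA, rfl⟩
    have := add_mem h2 h1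
    rw [← hx] at this
    obtain ⟨b, hbA, hbe⟩ := this
    exact ⟨b, hbA, hbe⟩
end

section
/- Let G be an abelian p-group of the form G = ⟨A⟩ + H, where H is a subgroup of finite exponent and A = {e_i : i ∈ ℕ} is an independent family with o(e_i) ≥ exp H for every i. Then ⟨A⟩ is a direct summand of G, i.e., there exists a subgroup V of G with G = ⟨A⟩ ⊕ V. -/
/-- If the abelian `p`-group `G` equals `⟨A⟩ + H` with `H` of finite exponent and
`A = {e_i}` independent with `o(e_i) ≥ exp H`, then `⟨A⟩` is a direct summand of `G`. -/
theorem stmt3 (G : Type) [AddCommGroup G] (p : ℕ) (hp : p.Prime)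
    (hpgroup : ∀ g : G, ∃ n : ℕ, p ^ n • g = 0)
    (e : ℕ → G) (he : IndepFamily e)
    (H : AddSubgroup G)
    (hHexp : AddMonoid.exponent H ≠ 0)
    (horder : ∀ i, AddMonoid.exponent H ≤ addOrderOf (e i))
    (hsum : AddSubgroup.closure (Set.range e) ⊔ H = ⊤) :
    ∃ V : AddSubgroup G, IsCompl (AddSubgroup.closure (Set.range e)) V := by
  classical
  set U : AddSubgroup G := AddSubgroup.closure (Set.range e) with hUdef
  have hUmem : ∀ u : G, u ∈ U ↔ ∃ a : ℕ →₀ ℤ, (a.sum fun i n => n • e i) = u := by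
    intro u
    rw [hUdef, ← Submodule.span_int_eq_addSubgroupClosure, Submodule.mem_toAddSubgroup,
      Finsupp.mem_span_range_iff_exists_finsupp]
  have horder_pow : ∀ g : G, ∃ s : ℕ, addOrderOf g = p ^ s := by
    intro g
    obtain ⟨n, hn⟩ := hpgroup g
    obtain ⟨s, -, hs⟩ := (Nat.dvd_prime_pow hp).1 (addOrderOf_dvd_of_nsmul_eq_zero hn)
    exact ⟨s, hs⟩
  -- every element of H (as element of G) has addOrderOf dividing exponent H
  have hHord : ∀ h ∈ H, addOrderOf h ∣ AddMonoid.exponent H := by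
    intro h hh
    have h1 := AddMonoid.addOrder_dvd_exponent (⟨h, hh⟩ : H)
    rwa [AddSubgroup.addOrderOf_mk] at h1
  -- exponent H = p ^ k
  obtain ⟨k, hk⟩ : ∃ k, AddMonoid.exponent H = p ^ k := by
    refine ⟨_, Nat.eq_prime_pow_of_unique_prime_dvd hHexp ?_⟩
    intro q hq hqd
    obtain ⟨x, hx⟩ := hq.exists_addOrderOf_eq_pow_padic_val_nat_add_exponent H
    have hx' : addOrderOf ((x : G)) = q ^ (AddMonoid.exponent H).factorization q := by
      rw [AddSubgroup.addOrderOf_coe]; exact hx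
    have hpos : 0 < (AddMonoid.exponent H).factorization q :=
      hq.factorization_pos_of_dvd hHexp hqd
    obtain ⟨n, hn⟩ := hpgroup (x : G)
    have : q ^ (AddMonoid.exponent H).factorization q ∣ p ^ n := by
      rw [← hx']; exact addOrderOf_dvd_of_nsmul_eq_zero hn
    have hq_dvd : q ∣ p ^ n := dvd_trans (dvd_pow_self q hpos.ne') this
    exact ((Nat.prime_dvd_prime_iff_eq hq hp).1 (hq.dvd_of_dvd_pow hq_dvd))
  have hHkill : ∀ h ∈ H, p ^ k • h = 0 := by
    intro h hh
    exact addOrderOf_dvd_iff_nsmul_eq_zero.1 (hk ▸ hHord h hh)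
  have hkle : ∀ i s, addOrderOf (e i) = p ^ s → k ≤ s := by
    intro i s hs
    have := horder i
    rw [hk, hs] at this
    exact (Nat.pow_le_pow_iff_right hp.one_lt).1 this
  have heiU : ∀ i, e i ∈ U := fun i => AddSubgroup.subset_closure (Set.mem_range_self i)
  -- divisibility: elements of U killed by p^(k-1) are divisible by p inside U
  have hdiv : ∀ u ∈ U, p ^ (k - 1) • u = 0 → 1 ≤ k → ∃ w ∈ U, p • w = u := by
    intro u hu hu0 hk1
    obtain ⟨a, ha⟩ := (hUmem u).1 hu
    have hcoef : ∀ i, (p : ℤ) ∣ a i := by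
      intro i
      have hsum0 : ((((p : ℤ) ^ (k - 1)) • a).sum fun i n => n • e i) = 0 := by
        rw [Finsupp.sum_smul_index' (fun i => zero_smul ℤ (e i))]
        simp_rw [smul_eq_mul, mul_smul]
        rw [← Finsupp.smul_sum, ha]
        have : ((p : ℤ) ^ (k - 1)) • u = ((p ^ (k - 1) : ℕ) : ℤ) • u := by push_cast; ring_nf
        rw [this, natCast_zsmul, hu0]
      have h2 := he (((p : ℤ) ^ (k - 1)) • a) hsum0 i
      rw [Finsupp.smul_apply, smul_eq_mul] at h2
      obtain ⟨s, hs⟩ := horder_pow (e i)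
      have hdvd : ((p : ℤ) ^ s) ∣ (p : ℤ) ^ (k - 1) * a i := by
        have h3 := addOrderOf_dvd_iff_zsmul_eq_zero.2 h2
        rw [hs] at h3
        exact_mod_cast h3
      have hks : k ≤ s := hkle i s hs
      have h4 : (p : ℤ) ^ (k - 1) * p ∣ (p : ℤ) ^ (k - 1) * a i := by
        calc (p : ℤ) ^ (k - 1) * p = (p : ℤ) ^ k := by
              rw [← pow_succ]; congr 1; omega
          _ ∣ (p : ℤ) ^ s := pow_dvd_pow _ hks
          _ ∣ _ := hdvd
      have hpne : ((p : ℤ) ^ (k - 1)) ≠ 0 := by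
        exact pow_ne_zero _ (by exact_mod_cast hp.ne_zero)
      exact (mul_dvd_mul_iff_left hpne).1 h4
    set b : ℕ →₀ ℤ := a.mapRange (fun n => n / p) (by simp) with hbdef
    refine ⟨b.sum fun i n => n • e i, ?_, ?_⟩
    · exact AddSubgroup.sum_mem U fun i _ => AddSubgroup.zsmul_mem U (heiU i) _
    · rw [Finsupp.smul_sum]
      have h5 : (b.sum fun i n => p • (n • e i)) = b.sum fun i n => ((p : ℤ) * n) • e i := by
        apply Finsupp.sum_congr
        intro i _
        rw [mul_smul, natCast_zsmul]
      rw [h5, hbdef, Finsupp.sum_mapRange_index (by simp)]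
      rw [← ha]
      apply Finsupp.sum_congr
      intro i _
      rw [Int.mul_ediv_cancel' (hcoef i)]
  -- Zorn: maximal subgroup disjoint from U
  have hzorn : ∀ c ⊆ {W : AddSubgroup G | Disjoint W U}, IsChain (· ≤ ·) c → ∀ y ∈ c,
      ∃ ub ∈ {W : AddSubgroup G | Disjoint W U}, ∀ z ∈ c, z ≤ ub := by
    intro c hcs hchain y hy
    refine ⟨sSup c, ?_, fun z hz => le_sSup hz⟩
    rw [Set.mem_setOf_eq, disjoint_iff, eq_bot_iff]
    intro x hx
    rw [AddSubgroup.mem_inf] at hx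
    obtain ⟨W, hWc, hxW⟩ := (AddSubgroup.mem_sSup_of_directedOn ⟨y, hy⟩ hchain.directedOn).1 hx.1
    have : x ∈ W ⊓ U := AddSubgroup.mem_inf.2 ⟨hxW, hx.2⟩
    exact (disjoint_iff.1 (hcs hWc)) ▸ this
  obtain ⟨V, -, hVmax⟩ := zorn_le_nonempty₀ {W : AddSubgroup G | Disjoint W U} hzorn ⊥ (by simp)
  have hdisj : Disjoint V U := hVmax.prop
  have hzero : ∀ x : G, x ∈ U → x ∈ V → x = 0 := by
    intro x hxU hxV
    have : x ∈ V ⊓ U := AddSubgroup.mem_inf.2 ⟨hxV, hxU⟩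
    rw [disjoint_iff.1 hdisj] at this
    exact this
  -- key step: p • y ∈ V → y ∈ U ⊔ V
  have hstep : ∀ y : G, p • y ∈ V → y ∈ U ⊔ V := by
    intro y hpy
    by_contra hy
    have hyV : y ∉ V := fun h => hy (AddSubgroup.mem_sup_right h)
    have hnd : ¬ Disjoint (V ⊔ AddSubgroup.zmultiples y) U := by
      intro hd
      have hle := hVmax.2 hd le_sup_left
      exact hyV (hle (AddSubgroup.mem_sup_right (AddSubgroup.mem_zmultiples y)))
    obtain ⟨x, hx, hx0⟩ : ∃ x, x ∈ (V ⊔ AddSubgroup.zmultiples y) ⊓ U ∧ x ≠ 0 := by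
      by_contra hno
      push_neg at hno
      refine hnd (disjoint_iff.2 (eq_bot_iff.2 fun x hx => ?_))
      rw [AddSubgroup.mem_bot]
      exact hno x hx
    rw [AddSubgroup.mem_inf] at hx
    obtain ⟨v, hv, z, hz, hvz⟩ := AddSubgroup.mem_sup.1 hx.1
    obtain ⟨n, rfl⟩ := AddSubgroup.mem_zmultiples_iff.1 hz
    by_cases hdvdn : (p : ℤ) ∣ n
    · obtain ⟨m, rfl⟩ := hdvdn
      have hny : ((p : ℤ) * m) • y ∈ V := by
        rw [mul_comm, mul_smul, natCast_zsmul]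
        exact AddSubgroup.zsmul_mem V hpy m
      exact hx0 (hzero x hx.2 (hvz ▸ AddSubgroup.add_mem V hv hny))
    · obtain ⟨t, ht⟩ := hpgroup y
      have hprime : Prime (p : ℤ) := Nat.prime_iff_prime_int.mp hp
      have hcop : IsCoprime ((p : ℤ) ^ t) n :=
        ((hprime.coprime_iff_not_dvd).2 hdvdn).pow_left
      obtain ⟨A, B, hAB⟩ := hcop
      have hyUV : y ∈ U ⊔ V := by
        have h6 : y = B • (n • y) := by
          have h7 : ((p : ℤ) ^ t) • y = 0 := by
            have : ((p : ℤ) ^ t) • y = ((p ^ t : ℕ) : ℤ) • y := by push_cast; ring_nf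
            rw [this, natCast_zsmul, ht]
          calc y = (A * (p : ℤ) ^ t + B * n) • y := by rw [hAB, one_zsmul]
            _ = A • (((p : ℤ) ^ t) • y) + B • (n • y) := by
                rw [add_zsmul, mul_zsmul, mul_zsmul]
            _ = B • (n • y) := by rw [h7, smul_zero, zero_add]
        have hnyUV : n • y ∈ U ⊔ V := by
          have : n • y = x - v := by rw [← hvz]; abel
          rw [this]
          exact AddSubgroup.sub_mem _ (AddSubgroup.mem_sup_left hx.2)
            (AddSubgroup.mem_sup_right hv)
        rw [h6]
        exact AddSubgroup.zsmul_mem _ hnyUV B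
      exact hy hyUV
  -- main induction
  have hind : ∀ j : ℕ, ∀ h : G, h ∈ H → p ^ j • h = 0 → h ∈ U ⊔ V := by
    intro j
    induction j with
    | zero =>
      intro h _ h0
      rw [pow_zero, one_smul] at h0
      rw [h0]; exact zero_mem _
    | succ j ih =>
      intro h hH h0
      by_cases hk0 : k = 0
      · have h8 := hHkill h hH
        rw [hk0, pow_zero, one_smul] at h8
        rw [h8]; exact zero_mem _
      have hk1 : 1 ≤ k := Nat.one_le_iff_ne_zero.2 hk0
      have hph : p • h ∈ U ⊔ V := by
        refine ih (p • h) (AddSubgroup.nsmul_mem H hH p) ?_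
        rw [smul_smul, ← pow_succ]
        exact h0
      obtain ⟨u, hu, v, hv, huv⟩ := AddSubgroup.mem_sup.1 hph
      have hu0 : p ^ (k - 1) • u = 0 := by
        have h9 : p ^ (k - 1) • u + p ^ (k - 1) • v = 0 := by
          rw [← smul_add, huv, smul_smul]
          have : p ^ (k - 1) * p = p ^ k := by rw [← pow_succ]; congr 1; omega
          rw [this]
          exact hHkill h hH
        have h10 : p ^ (k - 1) • u = -(p ^ (k - 1) • v) := eq_neg_of_add_eq_zero_left h9
        refine hzero _ (AddSubgroup.nsmul_mem U hu _) ?_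
        rw [h10]
        exact AddSubgroup.neg_mem V (AddSubgroup.nsmul_mem V hv _)
      obtain ⟨w, hw, hwu⟩ := hdiv u hu hu0 hk1
      have hpv : p • (h - w) ∈ V := by
        have : p • (h - w) = v := by
          rw [smul_sub, hwu, ← huv]; abel
        rw [this]; exact hv
      have h11 := hstep (h - w) hpv
      have h12 : h = (h - w) + w := by abel
      rw [h12]
      exact AddSubgroup.add_mem _ h11 (AddSubgroup.mem_sup_left hw)
  -- assemble
  refine ⟨V, ?_, ?_⟩
  · exact hdisj.symm
  · rw [codisjoint_iff, eq_top_iff, ← hsum]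
    refine sup_le le_sup_left ?_
    intro h hh
    exact hind k h hh (hHkill h hh)
end

section
/- Let (b_n)_{n∈ℕ} be an independent sequence in an abelian group G and let H be a finite subgroup of G. Then there exists n₀ such that H ∩ ⟨b_{n₀}, b_{n₀+1}, …⟩ = {0}. -/
lemma mem_all_tails_eq_zero {G : Type} [AddCommGroup G] (b : ℕ → G) (hb : IndepFamily b)
    (h : G) (hh : ∀ n, h ∈ AddSubgroup.closure (b '' Set.Ici n)) : h = 0 := by
  have key : ∀ n, ∃ l : ℕ →₀ ℤ, (↑l.support : Set ℕ) ⊆ Set.Ici n ∧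
      (l.sum fun i c => c • b i) = h := by
    intro n
    have := hh n
    rw [← Submodule.span_int_eq_addSubgroupClosure, Submodule.mem_toAddSubgroup,
      Finsupp.mem_span_image_iff_linearCombination] at this
    obtain ⟨l, hl, hl2⟩ := this
    exact ⟨l, hl, by rwa [Finsupp.linearCombination_apply] at hl2⟩
  obtain ⟨l₁, hl₁s, hl₁⟩ := key 0
  set N : ℕ := (l₁.support.sup id) + 1 with hN
  obtain ⟨l₂, hl₂s, hl₂⟩ := key N
  have hsupp : ∀ i ∈ l₁.support, l₂ i = 0 := by
    intro i hi
    by_contra hne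
    have : i ∈ l₂.support := Finsupp.mem_support_iff.mpr hne
    have h1 : N ≤ i := hl₂s this
    have h2 : i ≤ l₁.support.sup id := Finset.le_sup (f := id) hi
    omega
  have hrel : ((l₁ - l₂).sum fun i c => c • b i) = 0 := by
    rw [Finsupp.sum_sub_index (fun i c d => sub_smul c d (b i)), hl₁, hl₂, sub_self]
  have hz := hb _ hrel
  have : (l₁.sum fun i c => c • b i) = 0 := by
    apply Finset.sum_eq_zero
    intro i hi
    have := hz i
    rw [Finsupp.sub_apply, hsupp i hi, sub_zero] at this
    exact this
  rw [hl₁] at this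
  exact this

/-- For an independent sequence `(b_n)` and a finite subgroup `H` of an abelian
group `G`, some tail `⟨b_{n₀}, b_{n₀+1}, …⟩` meets `H` trivially. -/
theorem stmt4 (G : Type) [AddCommGroup G] (b : ℕ → G) (hb : IndepFamily b)
    (H : AddSubgroup G) (hH : Finite H) :
    ∃ n₀ : ℕ, H ⊓ AddSubgroup.closure (b '' Set.Ici n₀) = ⊥ := by
  have hch : ∀ h : H, ∃ n : ℕ, (h : G) = 0 ∨ (h : G) ∉ AddSubgroup.closure (b '' Set.Ici n) := by
    intro h
    by_contra hc
    push_neg at hc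
    have h0 : (h : G) = 0 := mem_all_tails_eq_zero b hb _ (fun n => (hc n).2)
    exact (hc 0).1 h0
  choose g hg using hch
  have := Fintype.ofFinite H
  refine ⟨Finset.univ.sup g, ?_⟩
  rw [eq_bot_iff]
  intro x hx
  rw [AddSubgroup.mem_inf] at hx
  rcases hg ⟨x, hx.1⟩ with h0 | hnot
  · simpa using h0
  · exfalso
    apply hnot
    refine AddSubgroup.closure_mono (Set.image_mono ?_) hx.2
    exact Set.Ici_subset_Ici.mpr (Finset.le_sup (Finset.mem_univ _))
end

section
/- Let (b_n)_{n∈ℕ} be an independent sequence in an abelian group G and let h be a nonzero element of G. Then there exists n₁ such that the family {h, b_{n₁}, b_{n₁+1}, …} is independent. -/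
/-- For an independent sequence `(b_n)` in an abelian group `G` and a nonzero
`h ∈ G`, there is `n₁` such that the family `{h, b_{n₁}, b_{n₁+1}, …}` is independent. -/
theorem stmt5 (G : Type) [AddCommGroup G] (b : ℕ → G) (hb : IndepFamily b)
    (h : G) (hh : h ≠ 0) :
    ∃ n₁ : ℕ, IndepFamily (fun o : Option ℕ => o.elim h (fun k => b (n₁ + k))) := by
  classical
  set M : Submodule ℤ G := Submodule.span ℤ (Set.range b) with hMdef
  have hbM : ∀ i, b i ∈ M := fun i => Submodule.subset_span ⟨i, rfl⟩
  set A : Submodule ℤ ℤ := M.comap (LinearMap.toSpanSingleton ℤ G h) with hAdef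
  have hAmem : ∀ m : ℤ, m ∈ A ↔ m • h ∈ M := fun m => Iff.rfl
  obtain ⟨d, hd⟩ := Submodule.IsPrincipal.principal A
  -- key representation fact
  have key : ∃ (n₁ : ℕ) (c : ℕ →₀ ℤ), (∀ i ∈ c.support, i < n₁) ∧
      ∀ m : ℤ, m • h ∈ M → ∃ q : ℤ,
        ((q • c).sum fun i n => n • b i) = m • h := by
    by_cases hd0 : d = 0
    · refine ⟨0, 0, by simp, fun m hm => ?_⟩
      have : m ∈ A := hm
      rw [hd, Submodule.mem_span_singleton] at this
      obtain ⟨q, hq⟩ := this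
      have hm0 : m = 0 := by simpa [hd0] using hq.symm
      exact ⟨0, by simp [hm0]⟩
    · have hdA : d ∈ A := hd ▸ Submodule.mem_span_singleton_self d
      have : d • h ∈ M := hdA
      rw [hMdef, Finsupp.mem_span_range_iff_exists_finsupp] at this
      obtain ⟨c, hc⟩ := this
      refine ⟨c.support.sup id + 1, c, fun i hi => ?_, fun m hm => ?_⟩
      · have := Finset.le_sup (f := id) hi
        simp only [id] at this
        omega
      · have : m ∈ A := hm
        rw [hd, Submodule.mem_span_singleton] at this
        obtain ⟨q, hq⟩ := this
        refine ⟨q, ?_⟩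
        rw [Finsupp.sum_smul_index (fun i => zero_smul ℤ (b i))]
        have : (c.sum fun i n => (q * n) • b i) = q • (c.sum fun i n => n • b i) := by
          rw [Finsupp.smul_sum]
          exact Finsupp.sum_congr fun i _ => (mul_smul q _ (b i))
        rw [this, hc, smul_smul, ← hq]
        norm_num
  obtain ⟨n₁, c, hcsupp, hrep⟩ := key
  refine ⟨n₁, ?_⟩
  intro a ha
  set f : Option ℕ → G := fun o : Option ℕ => o.elim h (fun k => b (n₁ + k)) with hf
  set e : ℕ ↪ ℕ := ⟨fun k => n₁ + k, fun x y hxy => by exact Nat.add_left_cancel hxy⟩ with he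
  set s : ℕ →₀ ℤ := Finsupp.embDomain e a.some with hs
  have hsum : (a.sum fun o n => n • f o) = a none • h + (a.some.sum fun k n => n • b (n₁ + k)) := by
    rw [Finsupp.sum_option_index_smul]
    rfl
  have hsemb : (s.sum fun i n => n • b i) = a.some.sum fun k n => n • b (n₁ + k) := by
    rw [hs, Finsupp.sum_embDomain]
    rfl
  have hrel : a none • h + (s.sum fun i n => n • b i) = 0 := by
    rw [hsemb, ← hsum, ha]
  have hsM : (s.sum fun i n => n • b i) ∈ M :=
    Submodule.sum_mem _ fun i _ => Submodule.smul_mem _ _ (hbM i)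
  have hmM : (a none) • h ∈ M := by
    have : (a none) • h = -(s.sum fun i n => n • b i) := by
      rw [eq_neg_iff_add_eq_zero]; exact hrel
    rw [this]; exact Submodule.neg_mem _ hsM
  obtain ⟨q, hq⟩ := hrep (a none) hmM
  set t : ℕ →₀ ℤ := q • c + s with ht
  have htsum : (t.sum fun i n => n • b i) = 0 := by
    rw [ht, Finsupp.sum_add_index' (fun i => zero_smul ℤ (b i))
      (fun i n₁' n₂' => add_smul n₁' n₂' (b i)), hq]
    exact hrel
  have htz := hb t htsum
  -- small support values of s vanish; large support values of q • c vanish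
  have hslow : ∀ i, i < n₁ → s i = 0 := by
    intro i hi
    apply Finsupp.embDomain_notin_range
    rintro ⟨k, rfl⟩
    simp only [he, Function.Embedding.coeFn_mk] at hi
    change n₁ + k < n₁ at hi
    omega
  have hchigh : ∀ i, n₁ ≤ i → (q • c) i = 0 := by
    intro i hi
    have : c i = 0 := by
      by_contra hne
      exact absurd (hcsupp i (Finsupp.mem_support_iff.mpr hne)) (by omega)
    simp [this]
  have hqc : ∀ i, (q • c) i • b i = 0 := by
    intro i
    rcases lt_or_ge i n₁ with hlt | hle
    · have := htz i
      rwa [ht, Finsupp.add_apply, hslow i hlt, add_zero] at this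
    · rw [hchigh i hle, zero_smul]
  have hmh : (a none) • h = 0 := by
    rw [← hq, Finsupp.sum]
    exact Finset.sum_eq_zero fun i _ => hqc i
  intro o
  match o with
  | none => exact hmh
  | some k =>
    have := htz (n₁ + k)
    rw [ht, Finsupp.add_apply, hchigh (n₁ + k) (by omega), zero_add] at this
    have hsk : s (n₁ + k) = a (some k) := by
      rw [hs]
      exact Finsupp.embDomain_apply_self e a.some k
    rw [hsk] at this
    exact this
end

section
/- Let G be an abelian group of finite exponent written as exp G = p₁^{n₁}⋯p_t^{n_t}, and let H be a nonzero subgroup with exp H = p₁^{b₁}⋯p_l^{b_l} (l ≤ t, all bᵢ ≥ 1). Suppose there exists j ∈ {1,…,l} such that G contains only finitely many independent elements g with o(g) = p_j^a for some a ≥ b_j. Set m = exp G / p_j^{n_j − b_j + 1} and let π : G → G be multiplication by m. Then π(H) ≠ 0 and π(G) is finite. -/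
section Aux

variable {G : Type} [AddCommGroup G]

/-- In a torsion abelian group, the closure of a finite set is finite. -/
lemma aux_closure_finite (htor : AddMonoid.IsTorsion G) (F : Finset G) :
    (AddSubgroup.closure (F : Set G) : Set G).Finite := by
  have htorS : AddMonoid.IsTorsion (AddSubgroup.closure (F : Set G)) := by
    intro x
    obtain ⟨k, hk, hk0⟩ := isOfFinAddOrder_iff_nsmul_eq_zero.mp (htor (x : G))
    exact isOfFinAddOrder_iff_nsmul_eq_zero.mpr ⟨k, hk, Subtype.ext (by push_cast; exact hk0)⟩
  have hfg : (AddSubgroup.closure (F : Set G)).FG := ⟨F, rfl⟩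
  haveI : AddGroup.FG (AddSubgroup.closure (F : Set G)) :=
    (AddGroup.fg_iff_addSubgroup_fg _).mpr hfg
  haveI : Finite (AddSubgroup.closure (F : Set G)) :=
    AddCommGroup.finite_of_fg_torsion _ htorS
  exact (AddSubgroup.closure (F : Set G) : Set G).toFinite

/-- A subgroup of bounded `p`-power exponent with finite `p`-socle is finite. -/
lemma aux_finite_of_socle_finite (p : ℕ) :
    ∀ (e : ℕ) (K : AddSubgroup G), (∀ x ∈ K, p ^ e • x = 0) →
      ({x : G | x ∈ K ∧ p • x = 0}).Finite → (K : Set G).Finite := by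
  intro e
  induction e with
  | zero =>
    intro K hK _
    refine Set.Finite.subset (Set.finite_singleton 0) fun x hx => ?_
    simpa using hK x hx
  | succ e ih =>
    intro K hK hs
    set φ : G →+ G := AddMonoidHom.mk' (fun x => p • x) (fun a b => smul_add p a b) with hφ
    have hmapK : ∀ x ∈ K.map φ, x ∈ K := by
      rintro _ ⟨x, hx, rfl⟩
      exact K.nsmul_mem hx p
    have hK' : ∀ x ∈ K.map φ, p ^ e • x = 0 := by
      rintro _ ⟨x, hx, rfl⟩
      show p ^ e • (p • x) = 0
      rw [smul_smul, ← pow_succ]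
      exact hK x hx
    have hs' : ({x : G | x ∈ K.map φ ∧ p • x = 0}).Finite :=
      hs.subset fun x hx => ⟨hmapK x hx.1, hx.2⟩
    have hfin' := ih (K.map φ) hK' hs'
    have hsub : (K : Set G) ⊆ ⋃ z ∈ (K.map φ : Set G), {x : G | x ∈ K ∧ p • x = z} := by
      intro x hx
      refine Set.mem_biUnion ?_ ⟨hx, rfl⟩
      exact ⟨x, hx, rfl⟩
    refine Set.Finite.subset (Set.Finite.biUnion hfin' ?_) hsub
    rintro z hz
    rcases hz with ⟨x₀, hx₀, rfl⟩
    refine Set.Finite.subset (hs.image fun w => w + x₀) ?_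
    rintro x ⟨hxK, hxp⟩
    refine ⟨x - x₀, ⟨K.sub_mem hxK hx₀, ?_⟩, sub_add_cancel x x₀⟩
    rw [smul_sub, hxp]
    show φ x₀ - p • x₀ = 0
    simp [hφ]

/-- Chain condition implies independence of the range family. -/
lemma aux_indep_of_chain (y : ℕ → G) (hinj : Function.Injective y)
    (hy : ∀ (k : ℕ) (c : ℤ), c • y k ∈ AddSubgroup.closure (y '' Set.Iio k) → c • y k = 0) :
    IndepFamily (fun x : Set.range y => (x : G)) := by
  classical
  have main : ∀ (N : ℕ) (a : ℕ →₀ ℤ), (∀ j ∈ a.support, j < N) →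
      (a.sum fun j c => c • y j) = 0 → ∀ j, a j • y j = 0 := by
    intro N
    induction N with
    | zero =>
      intro a hsupp _ j
      have : a j = 0 := by
        by_contra h
        exact Nat.not_lt_zero j (hsupp j (Finsupp.mem_support_iff.mpr h))
      simp [this]
    | succ N ih =>
      intro a hsupp hs0 j
      have herase : a N • y N + ((a.erase N).sum fun j c => c • y j) = 0 := by
        have := Finsupp.add_sum_erase' a N (fun j c => c • y j)
          (fun i => zero_smul ℤ (y i))
        rw [hs0] at this
        exact this
      have hmem : ((a.erase N).sum fun j c => c • y j) ∈
          AddSubgroup.closure (y '' Set.Iio N) := by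
        refine AddSubgroup.sum_mem _ fun i hi => ?_
        have hne : i ≠ N := by
          intro h; subst h
          simp [Finsupp.support_erase] at hi
        have hlt : i < N := by
          have hsup : i ∈ a.support := by
            rw [Finsupp.mem_support_iff]
            rw [Finsupp.mem_support_iff, Finsupp.erase_ne hne] at hi
            exact hi
          have := hsupp i hsup
          omega
        have hlt' : i ∈ Set.Iio N := hlt
        show ((a.erase N) i) • y i ∈ _
        exact AddSubgroup.zsmul_mem _
          (AddSubgroup.subset_closure (Set.mem_image_of_mem y hlt')) _
      have hkey : a N • y N = 0 := by
        refine hy N _ ?_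
        have : a N • y N = -((a.erase N).sum fun j c => c • y j) :=
          eq_neg_of_add_eq_zero_left herase
        rw [this]
        exact neg_mem hmem
      have herase0 : ((a.erase N).sum fun j c => c • y j) = 0 := by
        rw [hkey, zero_add] at herase
        exact herase
      have hrec := ih (a.erase N) (fun i hi => by
        have hne : i ≠ N := by
          intro h; subst h
          simp at hi
        have hsup : i ∈ a.support := by
          rw [Finsupp.mem_support_iff]
          rw [Finsupp.mem_support_iff, Finsupp.erase_ne hne] at hi
          exact hi
        have := hsupp i hsup
        omega) herase0
      by_cases hj : j = N
      · subst hj; exact hkey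
      · have := hrec j
        rwa [Finsupp.erase_ne hj] at this
  intro a hsum i
  set e := Equiv.ofInjective y hinj with he
  have hval : ∀ j : ℕ, ((e j : Set.range y) : G) = y j := fun j => by
    simp [he, Equiv.ofInjective_apply]
  have hvalsymm : ∀ x : Set.range y, y (e.symm x) = (x : G) := fun x => by
    conv_rhs => rw [← e.apply_symm_apply x]
    rw [hval]
  set a' : ℕ →₀ ℤ := Finsupp.equivMapDomain e.symm a with ha'
  have ha'app : ∀ j, a' j = a (e j) := fun j => by
    simp [ha', Finsupp.equivMapDomain_apply]
  have hsum' : (a'.sum fun j c => c • y j) = 0 := by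
    rw [ha', Finsupp.equivMapDomain_eq_mapDomain,
      Finsupp.sum_mapDomain_index_inj e.symm.injective]
    rw [← hsum]
    exact Finsupp.sum_congr fun x _ => by rw [hvalsymm]
  have hall := main (a'.support.sup id + 1) a'
    (fun j hj => Nat.lt_succ_of_le (Finset.le_sup (f := id) hj)) hsum'
  have := hall (e.symm i)
  rwa [ha'app, e.apply_symm_apply, hvalsymm] at this

end Aux

/-- Let `G` be abelian of finite exponent, `H ≤ G` nonzero, `p = p_j` a prime with
`b = b_j ≥ 1` the multiplicity of `p` in `exp H` and `n = n_j` its multiplicity in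
`exp G`.  If every independent subset of `{g : o(g) = p^a, a ≥ b}` is finite, then for
`m = exp G / p^(n - b + 1)` and `π : g ↦ m • g` one has `π(H) ≠ 0` and `π(G)` finite. -/
theorem stmt9 (G : Type) [AddCommGroup G]
    (heG : AddMonoid.exponent G ≠ 0)
    (H : AddSubgroup G) (hH : H ≠ ⊥)
    (p : ℕ) (hp : p.Prime)
    (b n : ℕ)
    (hb : b = (AddMonoid.exponent H).factorization p) (hb1 : 1 ≤ b)
    (hn : n = (AddMonoid.exponent G).factorization p)
    (hfin : ∀ s : Set G, (∀ g ∈ s, ∃ a : ℕ, b ≤ a ∧ addOrderOf g = p ^ a) →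
      IndepFamily (fun x : s => (x : G)) → s.Finite)
    (m : ℕ) (hm : m = AddMonoid.exponent G / p ^ (n - b + 1)) :
    (∃ h ∈ H, m • h ≠ 0) ∧ (Set.range fun g : G => m • g).Finite := by
  classical
  -- basic arithmetic facts
  have hHdvd : AddMonoid.exponent H ∣ AddMonoid.exponent G := by
    apply AddMonoid.exponent_dvd_of_forall_nsmul_eq_zero
    intro h
    ext
    push_cast
    exact AddMonoid.exponent_nsmul_eq_zero (h : G)
  have heH : AddMonoid.exponent H ≠ 0 := by
    intro h0
    rw [h0] at hHdvd
    exact heG (zero_dvd_iff.mp hHdvd)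
  have hbn : b ≤ n := by
    rw [hb, hn]
    exact (Nat.factorization_prime_le_iff_dvd heH heG).mpr hHdvd p hp
  have hpe_dvd : p ^ (n - b + 1) ∣ AddMonoid.exponent G := by
    refine dvd_trans (pow_dvd_pow p (by omega : n - b + 1 ≤ n)) ?_
    rw [hn]
    exact Nat.ordProj_dvd _ p
  have hme : m * p ^ (n - b + 1) = AddMonoid.exponent G := by
    rw [hm]
    exact Nat.div_mul_cancel hpe_dvd
  have hm0 : m ≠ 0 := by
    intro h0
    rw [h0, zero_mul] at hme
    exact heG hme.symm
  have hmfact : m.factorization p = b - 1 := by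
    have h1 : m.factorization p = n - (n - b + 1) := by
      rw [hm, Nat.factorization_div hpe_dvd, Finsupp.tsub_apply, ← hn,
        hp.factorization_pow, Finsupp.single_eq_same]
    rw [h1]
    omega
  have hpbm : ¬ p ^ b ∣ m := by
    rw [hp.pow_dvd_iff_le_factorization hm0, hmfact]
    omega
  have hpb1m : p ^ (b - 1) ∣ m := hmfact ▸ Nat.ordProj_dvd m p
  have hb' : b - 1 + 1 = b := by omega
  constructor
  · -- π(H) ≠ 0
    obtain ⟨h, hh⟩ := hp.exists_addOrderOf_eq_pow_padic_val_nat_add_exponent (G := H)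
    refine ⟨(h : G), h.2, ?_⟩
    intro h0
    have : m • h = 0 := by
      ext
      push_cast
      exact h0
    have hdvd : addOrderOf h ∣ m := addOrderOf_dvd_of_nsmul_eq_zero this
    rw [hh, ← hb] at hdvd
    exact hpbm hdvd
  · -- π(G) finite
    set φm : G →+ G := AddMonoidHom.mk' (fun g => m • g) (fun u v => smul_add m u v) with hφm
    have hrange : (Set.range fun g : G => m • g) = (φm.range : Set G) := by
      rw [AddMonoidHom.coe_range]
      rfl
    rw [hrange]
    have htor : AddMonoid.IsTorsion G := fun g =>
      isOfFinAddOrder_iff_nsmul_eq_zero.mpr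
        ⟨AddMonoid.exponent G, Nat.pos_of_ne_zero heG, AddMonoid.exponent_nsmul_eq_zero g⟩
    apply aux_finite_of_socle_finite p (n - b + 1)
    · rintro x ⟨g, rfl⟩
      show p ^ (n - b + 1) • (m • g) = 0
      rw [smul_smul, mul_comm, hme]
      exact AddMonoid.exponent_nsmul_eq_zero g
    -- the socle of the image is finite
    by_contra hinf'
    have hinf : ({x : G | x ∈ φm.range ∧ p • x = 0}).Infinite := hinf'
    -- construction step
    have step : ∀ F : Finset G, ∃ u : G, addOrderOf u = p ^ b ∧
        p ^ (b - 1) • u ∉ AddSubgroup.closure (F : Set G) := by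
      intro F
      have hcl := aux_closure_finite htor F
      obtain ⟨x, hxS, hxcl⟩ := (hinf.diff hcl).nonempty
      obtain ⟨g, hg⟩ := hxS.1
      have hgx : m • g = x := hg
      set u : G := (m / p ^ (b - 1)) • g with hu
      have hx' : p ^ (b - 1) • u = x := by
        rw [hu, smul_smul, Nat.mul_div_cancel' hpb1m, hgx]
      have hx0 : x ≠ 0 := fun h0 =>
        hxcl (h0 ▸ (AddSubgroup.closure (F : Set G)).zero_mem)
      refine ⟨u, ?_, by rw [hx']; exact hxcl⟩
      have hub : p ^ b • u = 0 := by
        rw [show p ^ b = p * p ^ (b - 1) from by rw [← pow_succ', hb'],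
          mul_smul, hx']
        exact hxS.2
      have hord : addOrderOf u ∣ p ^ b := addOrderOf_dvd_of_nsmul_eq_zero hub
      obtain ⟨c, hcb, hcu⟩ := (Nat.dvd_prime_pow hp).mp hord
      have hcb' : c = b := by
        by_contra hne
        have hc : c ≤ b - 1 := by omega
        have : p ^ (b - 1) • u = 0 := by
          rw [show p ^ (b - 1) = p ^ (b - 1 - c) * p ^ c from by
              rw [← pow_add]; congr 1; omega,
            mul_smul, ← hcu, addOrderOf_nsmul_eq_zero, smul_zero]
        exact hx0 (by rw [← hx', this])
      rw [hcu, hcb']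
    set next : Finset G → G := fun F => Classical.choose (step F) with hnext
    have next1 : ∀ F, addOrderOf (next F) = p ^ b := fun F =>
      (Classical.choose_spec (step F)).1
    have next2 : ∀ F, p ^ (b - 1) • next F ∉ AddSubgroup.closure ((F : Finset G) : Set G) :=
      fun F => (Classical.choose_spec (step F)).2
    set prev : ℕ → Finset G := fun k => Nat.rec ∅ (fun _ Fk => insert (next Fk) Fk) k
      with hprevdef
    set y : ℕ → G := fun k => next (prev k) with hy
    have hprev : ∀ k, prev k = (Finset.range k).image y := by
      intro k
      induction k with
      | zero => simp [hprevdef]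
      | succ k ihk =>
        show insert (next (prev k)) (prev k) = (Finset.range (k + 1)).image y
        rw [Finset.range_add_one, Finset.image_insert, ← ihk]
    have hprevset : ∀ k, ((prev k : Finset G) : Set G) = y '' Set.Iio k := by
      intro k
      rw [hprev k, Finset.coe_image, Finset.coe_range]
    have hyord : ∀ k, addOrderOf (y k) = p ^ b := fun k => next1 (prev k)
    have hynotin : ∀ k, p ^ (b - 1) • y k ∉ AddSubgroup.closure (y '' Set.Iio k) := by
      intro k
      rw [← hprevset k]
      exact next2 (prev k)
    have hclmem : ∀ {j k : ℕ}, j < k → y j ∈ AddSubgroup.closure (y '' Set.Iio k) :=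
      fun {j k} hjk => AddSubgroup.subset_closure ⟨j, hjk, rfl⟩
    have hinj : Function.Injective y := by
      intro j k hjk
      by_contra hne
      rcases Nat.lt_or_ge j k with h | h
      · exact hynotin k (hjk ▸ AddSubgroup.nsmul_mem _ (hclmem h) _)
      · have h' : k < j := by omega
        exact hynotin j (hjk.symm ▸ AddSubgroup.nsmul_mem _ (hclmem h') _)
    -- chain condition
    have hchain : ∀ (k : ℕ) (c : ℤ),
        c • y k ∈ AddSubgroup.closure (y '' Set.Iio k) → c • y k = 0 := by
      intro k c hc
      by_contra hne
      set F := AddSubgroup.closure (y '' Set.Iio k) with hF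
      have hd0 : c.natAbs ≠ 0 := by
        intro h0
        exact hne (by rw [Int.natAbs_eq_zero.mp h0, zero_smul])
      have hnd : ¬ p ^ b ∣ c.natAbs := by
        intro hdvd
        apply hne
        have : ((addOrderOf (y k) : ℕ) : ℤ) ∣ c := by
          rw [hyord k]
          exact Int.dvd_natAbs.mp (Int.natCast_dvd_natCast.mpr hdvd)
        exact addOrderOf_dvd_iff_zsmul_eq_zero.mp this
      set v := c.natAbs.factorization p with hv
      have hvb : v ≤ b - 1 := by
        have : ¬ b ≤ v := fun hle =>
          hnd ((hp.pow_dvd_iff_le_factorization hd0).mpr hle)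
        omega
      set w := c.natAbs / p ^ v with hw
      have hwv : p ^ v * w = c.natAbs := Nat.mul_div_cancel' (Nat.ordProj_dvd _ p)
      have hpw : ¬ p ∣ w := by
        intro hdvd
        obtain ⟨w', hww⟩ := hdvd
        have : p ^ (v + 1) ∣ c.natAbs := ⟨w', by rw [← hwv, hww]; ring⟩
        have := (hp.pow_dvd_iff_le_factorization hd0).mp this
        omega
      have hmemF : (c.natAbs : ℤ) • y k ∈ F := by
        rcases Int.natAbs_eq c with h | h
        · rw [← h]; exact hc
        · rw [show ((c.natAbs : ℤ)) = -c from by omega, neg_smul]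
          exact neg_mem hc
      have hmemFn : c.natAbs • y k ∈ F := by
        rw [natCast_zsmul] at hmemF
        exact hmemF
      have hzF : w • (p ^ (b - 1) • y k) ∈ F := by
        have heq : w • (p ^ (b - 1) • y k) = p ^ (b - 1 - v) • (c.natAbs • y k) := by
          rw [smul_smul, smul_smul, ← hwv,
            show w * p ^ (b - 1) = p ^ (b - 1 - v) * (p ^ v * w) from by
              rw [← mul_assoc, ← pow_add, show b - 1 - v + v = b - 1 from by omega,
                mul_comm]]
        rw [heq]
        exact AddSubgroup.nsmul_mem _ hmemFn _
      have hp0 : p • (p ^ (b - 1) • y k) = 0 := by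
        rw [smul_smul, show p * p ^ (b - 1) = p ^ b from by rw [← pow_succ', hb'],
          ← hyord k, addOrderOf_nsmul_eq_zero]
      have hco : Nat.gcd p w = 1 := (hp.coprime_iff_not_dvd).mpr hpw
      have hbez : (1 : ℤ) = p * Nat.gcdA p w + w * Nat.gcdB p w := by
        have := Nat.gcd_eq_gcd_ab p w
        rw [hco] at this
        exact_mod_cast this
      have hxF : p ^ (b - 1) • y k ∈ F := by
        have h1 : ((p : ℤ) * Nat.gcdA p w + (w : ℤ) * Nat.gcdB p w) •
            (p ^ (b - 1) • y k) = p ^ (b - 1) • y k := by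
          rw [← hbez, one_smul]
        rw [← h1, add_smul]
        refine AddSubgroup.add_mem _ ?_ ?_
        · rw [mul_comm, mul_smul, natCast_zsmul, hp0, smul_zero]
          exact zero_mem _
        · rw [mul_comm, mul_smul, natCast_zsmul]
          exact AddSubgroup.zsmul_mem _ hzF _
      exact hynotin k hxF
    -- contradiction with hfin
    have hfins : (Set.range y).Finite := by
      refine hfin (Set.range y) ?_ (aux_indep_of_chain y hinj hchain)
      rintro g ⟨k, rfl⟩
      exact ⟨b, le_refl b, hyord k⟩
    exact (Set.infinite_range_of_injective hinj) hfins
end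

section
/- Let G be a subgroup of an abelian Hausdorff topological group S, and let (a_n^j)_{n∈ℕ}, for 0 ≤ j ≤ q−1, be q sequences in G such that (a_n^j) converges in S to an element b^j. If the subgroup ⟨b^0, …, b^{q−1}⟩ of S meets G trivially, then the interleaved sequence d_{nq+j} = a_n^j (n ≥ 1, 0 ≤ j ≤ q−1) is a T-sequence in G: for every k ≥ 0 and every nonzero g ∈ G there exists m such that g is not a sum l₁ d_{r₁} + ⋯ + l_s d_{r_s} with m < r₁ < ⋯ < r_s and Σ|lᵢ| ≤ k+1. -/
open Filter Finset Topology

private lemma aux_sum_exact {S : Type} [AddCommGroup S] [TopologicalSpace S]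
    [IsTopologicalAddGroup S] (k : ℕ) :
    ∀ (W : Set S), W ∈ nhds 0 →
    ∃ V ∈ nhds (0:S), ∀ f : Fin k → S, (∀ i, f i ∈ V) → ∑ i, f i ∈ W := by
  induction k with
  | zero =>
    intro W hW
    exact ⟨W, hW, fun f _ => by simpa using mem_of_mem_nhds hW⟩
  | succ k ih =>
    intro W hW
    obtain ⟨W₁, hW₁, hadd⟩ := exists_nhds_zero_half hW
    obtain ⟨V, hV, hVs⟩ := ih W₁ hW₁
    refine ⟨V ∩ W₁, Filter.inter_mem hV hW₁, fun f hf => ?_⟩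
    rw [Fin.sum_univ_succ]
    exact hadd _ (hf 0).2 _ (hVs _ (fun i => (hf i.succ).1))

private lemma aux_sum {S : Type} [AddCommGroup S] [TopologicalSpace S]
    [IsTopologicalAddGroup S] (k : ℕ) (W : Set S) (hW : W ∈ nhds 0) :
    ∃ V ∈ nhds (0:S), ∀ (s : ℕ), s ≤ k → ∀ f : Fin s → S,
      (∀ i, f i ∈ V) → ∑ i, f i ∈ W := by
  obtain ⟨V, hV, hVs⟩ := aux_sum_exact k W hW
  refine ⟨V, hV, fun s hs f hf => ?_⟩
  set F : ℕ → S := fun i => if h : i < s then f ⟨i, h⟩ else 0 with hFdef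
  have h1 : ∑ i, f i = ∑ i ∈ Finset.range s, F i := by
    rw [← Fin.sum_univ_eq_sum_range]
    exact Finset.sum_congr rfl fun i _ => by simp [hFdef, i.isLt]
  have h2 : ∑ i ∈ Finset.range s, F i = ∑ i ∈ Finset.range k, F i := by
    refine Finset.sum_subset (Finset.range_subset_range.2 hs) ?_
    intro x _ hx
    simp only [Finset.mem_range, not_lt] at hx
    simp [hFdef, Nat.not_lt.2 hx]
  have h3 : ∑ i ∈ Finset.range k, F i = ∑ i : Fin k, F i :=
    (Fin.sum_univ_eq_sum_range F k).symm
  rw [h1, h2, h3]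
  refine hVs _ fun i => ?_
  simp only [hFdef]
  split
  · exact hf _
  · exact mem_of_mem_nhds hV

/-- Let `G` be a subgroup of a Hausdorff topological abelian group `S`, and let
`(a_n^j)_n ⊆ G` (for `0 ≤ j ≤ q-1`) converge in `S` to `b^j`.  If
`⟨b^0,…,b^{q-1}⟩ ∩ G = 0`, then the interleaved sequence `d_{nq+j} = a_n^j` satisfies
the Protasov–Zelenyuk criterion in `G`, hence is a `T`-sequence. -/
theorem stmt11 (S : Type) [AddCommGroup S] [TopologicalSpace S] [IsTopologicalAddGroup S]
    [T2Space S]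
    (G : AddSubgroup S) (q : ℕ) (hq : 1 ≤ q)
    (a : ℕ → Fin q → S) (ha : ∀ n j, a n j ∈ G)
    (b : Fin q → S)
    (hconv : ∀ j, Filter.Tendsto (fun n => a n j) Filter.atTop (nhds (b j)))
    (htriv : AddSubgroup.closure (Set.range b) ⊓ G = ⊥)
    (d : ℕ → S)
    (hd : ∀ n : ℕ, 1 ≤ n → ∀ j : Fin q, d (n * q + (j : ℕ)) = a n j) :
    ∀ k : ℕ, ∀ g ∈ G, g ≠ 0 → ∃ m : ℕ,
      ∀ (s : ℕ) (r : Fin s → ℕ) (l : Fin s → ℤ),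
        (∀ i, m < r i) → StrictMono r → (∀ i, l i ≠ 0) →
        (∑ i, (l i).natAbs) ≤ k + 1 →
        g ≠ ∑ i, l i • d (r i) := by
  intro k g hg hg0
  by_contra hcon
  push_neg at hcon
  classical
  have hq0 : 0 < q := hq
  set F : Finset S :=
    (Fintype.piFinset fun _ : Fin q => Finset.Icc (-(k+1:ℤ)) (k+1)).image
      fun c => ∑ j, c j • b j with hFdef
  have claimA : ∀ W ∈ nhds (0:S), ∃ h ∈ F, g - h ∈ W := by
    intro W hW
    obtain ⟨V, hV, hVsum⟩ := aux_sum (k+1) W hW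
    set V₂ : Set S := ⋂ t ∈ Finset.Icc (-(k+1:ℤ)) (k+1), (fun x => t • x) ⁻¹' V with hV₂def
    have hV₂ : V₂ ∈ nhds (0:S) := by
      rw [hV₂def, Filter.biInter_finset_mem]
      intro t _
      refine (continuous_zsmul t).continuousAt.preimage_mem_nhds ?_
      simpa using hV
    have hconv2 : ∀ᶠ n in atTop, ∀ j, a n j - b j ∈ V₂ := by
      rw [Filter.eventually_all]
      intro j
      have ht : Filter.Tendsto (fun n => a n j - b j) atTop (nhds (b j - b j)) :=
        (hconv j).sub tendsto_const_nhds
      rw [sub_self] at ht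
      exact ht hV₂
    obtain ⟨N, hN⟩ := Filter.eventually_atTop.1 hconv2
    obtain ⟨s, r, l, hr, hmono, hl0, hsum, hgeq⟩ := hcon ((N+1) * q)
    set κ : Fin s → Fin q := fun i => ⟨r i % q, Nat.mod_lt _ hq0⟩ with hκdef
    set c : Fin q → ℤ := fun j => ∑ i ∈ Finset.univ.filter (fun i => κ i = j), l i with hcdef
    have hlabs : ∀ i, |l i| ≤ (k:ℤ) + 1 := by
      intro i
      have h1 : (l i).natAbs ≤ k + 1 :=
        le_trans (Finset.single_le_sum (f := fun i => (l i).natAbs)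
          (fun i _ => Nat.zero_le _) (Finset.mem_univ i)) hsum
      rw [Int.abs_eq_natAbs]
      exact_mod_cast h1
    have hcb : ∀ j, c j ∈ Finset.Icc (-(k+1:ℤ)) (k+1) := by
      intro j
      have h1 : |c j| ≤ (k:ℤ) + 1 := by
        calc |c j| ≤ ∑ i ∈ Finset.univ.filter (fun i => κ i = j), |l i| :=
              Finset.abs_sum_le_sum_abs _ _
          _ ≤ ∑ i, |l i| :=
              Finset.sum_le_sum_of_subset_of_nonneg (Finset.filter_subset _ _)
                (fun i _ _ => abs_nonneg _)
          _ = ((∑ i, (l i).natAbs : ℕ) : ℤ) := by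
              rw [Nat.cast_sum]
              exact Finset.sum_congr rfl fun i _ => Int.abs_eq_natAbs (l i)
          _ ≤ (k:ℤ) + 1 := by exact_mod_cast hsum
      rw [Finset.mem_Icc]
      obtain ⟨h2, h3⟩ := abs_le.1 h1
      constructor <;> linarith
    have hsk : s ≤ k + 1 := by
      calc s = ∑ _i : Fin s, 1 := by simp
        _ ≤ ∑ i, (l i).natAbs :=
            Finset.sum_le_sum fun i _ =>
              Nat.one_le_iff_ne_zero.2 (Int.natAbs_ne_zero.2 (hl0 i))
        _ ≤ k + 1 := hsum
    have hrq : ∀ i, N + 1 ≤ r i / q := by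
      intro i
      rw [Nat.le_div_iff_mul_le hq0]
      exact le_of_lt (hr i)
    have hr1 : ∀ i, 1 ≤ r i / q := fun i => le_trans (Nat.le_add_left _ _) (hrq i)
    have hdr : ∀ i, d (r i) = a (r i / q) (κ i) := by
      intro i
      have := hd (r i / q) (hr1 i) (κ i)
      rw [← this]
      congr 1
      have hk2 : (κ i : ℕ) = r i % q := rfl
      rw [hk2, mul_comm]
      exact (Nat.div_add_mod _ _).symm
    refine ⟨∑ j, c j • b j, by
      rw [hFdef]; exact Finset.mem_image.2 ⟨c, Fintype.mem_piFinset.2 hcb, rfl⟩, ?_⟩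
    have h2 : ∑ j, c j • b j = ∑ i, l i • b (κ i) := by
      calc ∑ j, c j • b j
          = ∑ j, ∑ i ∈ Finset.univ.filter (fun i => κ i = j), l i • b j := by
            exact Finset.sum_congr rfl fun j _ => by rw [hcdef]; rw [Finset.sum_smul]
        _ = ∑ j, ∑ i ∈ Finset.univ.filter (fun i => κ i = j), l i • b (κ i) := by
            refine Finset.sum_congr rfl fun j _ => Finset.sum_congr rfl fun i hi => ?_
            rw [(Finset.mem_filter.1 hi).2]
        _ = ∑ i, l i • b (κ i) := Finset.sum_fiberwise _ _ _
    have key : g - ∑ j, c j • b j = ∑ i, l i • (a (r i / q) (κ i) - b (κ i)) := by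
      rw [hgeq, h2, ← Finset.sum_sub_distrib]
      exact Finset.sum_congr rfl fun i _ => by rw [hdr i, smul_sub]
    rw [key]
    refine hVsum s hsk _ fun i => ?_
    have hV2m : a (r i / q) (κ i) - b (κ i) ∈ V₂ :=
      hN _ (le_trans (Nat.le_succ N) (hrq i)) (κ i)
    have hli : l i ∈ Finset.Icc (-(k+1:ℤ)) (k+1) := by
      rw [Finset.mem_Icc]
      obtain ⟨ha', hb'⟩ := abs_le.1 (hlabs i)
      constructor <;> linarith
    rw [hV₂def] at hV2m
    exact Set.mem_iInter₂.1 hV2m (l i) hli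
  have hgF : g ∈ (F : Set S) := by
    have hclosed : IsClosed (F : Set S) := F.finite_toSet.isClosed
    rw [← hclosed.closure_eq, mem_closure_iff_nhds]
    intro U hU
    have hW : (fun x => g - x) ⁻¹' U ∈ nhds (0:S) := by
      refine (continuous_const.sub continuous_id).continuousAt.preimage_mem_nhds ?_
      simpa using hU
    obtain ⟨h, hhF, hgh⟩ := claimA _ hW
    exact ⟨h, by simpa using hgh, hhF⟩
  rw [Finset.mem_coe, hFdef, Finset.mem_image] at hgF
  obtain ⟨c, _, hce⟩ := hgF
  have hmem : g ∈ AddSubgroup.closure (Set.range b) ⊓ G := by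
    rw [AddSubgroup.mem_inf]
    refine ⟨?_, hg⟩
    rw [← hce]
    exact AddSubgroup.sum_mem _ fun j _ =>
      AddSubgroup.zsmul_mem _ (AddSubgroup.subset_closure (Set.mem_range_self j)) _
  rw [htriv, AddSubgroup.mem_bot] at hmem
  exact hg0 hmem
end
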